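/- Let s ≥ 2 and ℓ ≥ 0 be even natural numbers and 0 ≤ r ≤ s. Then for all real x ≤ 0, we have 0 ≤ G_{r,s}(E_ℓ(x/s)) ≤ e^{|x|}. -/
import Mathlib


/-- Φ_t, the Chebyshev polynomial of the first kind over ℝ (indexed by ℤ,
with Φ_{-t} = Φ_t): Φ_0(x)=1, Φ_1(x)=x, Φ_{t+1}(x)=2x·Φ_t(x)−Φ_{t−1}(x). -/
noncomputable def Phi (t : ℤ) : Polynomial ℝ := Polynomial.Chebyshev.T ℝ t

/-- G_{r,s}(x) = E_{t∼D_s}[Φ_t(x)·1{|t| ≤ r}]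
  = 2^{−s} ∑_{j=0}^{s} binom(s,j)·Φ_{2j−s}(x)·1{|2j−s| ≤ r}. -/
noncomputable def G (r s : ℕ) : Polynomial ℝ :=
  ((2 : ℝ) ^ s)⁻¹ • ∑ j ∈ Finset.range (s + 1),
    (s.choose j : ℝ) • (if |2 * (j : ℤ) - s| ≤ (r : ℤ) then Phi (2 * j - s) else 0)


/-- The exponential truncation polynomial E_ℓ(x) := ∑_{j=0}^{ℓ} (−1)^j x^j / j!. -/
noncomputable def E (ℓ : ℕ) (x : ℝ) : ℝ :=
  ∑ j ∈ Finset.range (ℓ + 1), (-1) ^ j * x ^ j / (Nat.factorial j)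

open Finset

lemma T_real_cosh (θ : ℝ) (n : ℤ) :
    (Polynomial.Chebyshev.T ℝ n).eval (Real.cosh θ) = Real.cosh (n * θ) := by
  have h := Polynomial.Chebyshev.T_complex_cos ((θ : ℂ) * Complex.I) n
  rw [Complex.cos_mul_I] at h
  have h2 : (n : ℂ) * ((θ : ℂ) * Complex.I) = ((n * θ : ℝ) : ℂ) * Complex.I := by
    push_cast; ring
  rw [h2, Complex.cos_mul_I, ← Complex.ofReal_cosh, ← Complex.ofReal_cosh] at h
  have h3 := Polynomial.Chebyshev.complex_ofReal_eval_T (Real.cosh θ) n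
  rw [h] at h3
  exact_mod_cast h3

lemma exists_cosh (u : ℝ) (hu : 1 ≤ u) : ∃ θ : ℝ, Real.cosh θ = u := by
  set s := Real.sqrt (u ^ 2 - 1) with hs
  have hs0 : 0 ≤ s := Real.sqrt_nonneg _
  have hsq : s ^ 2 = u ^ 2 - 1 := Real.sq_sqrt (by nlinarith)
  have hpos : 0 < u + s := by nlinarith
  refine ⟨Real.log (u + s), ?_⟩
  rw [Real.cosh_eq, Real.exp_log hpos, Real.exp_neg, Real.exp_log hpos]
  have hinv : (u + s)⁻¹ = u - s := by
    field_simp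
    nlinarith
  rw [hinv]; ring

lemma sum_cosh (s : ℕ) (θ : ℝ) :
    ∑ j ∈ Finset.range (s + 1), (s.choose j : ℝ) * Real.cosh ((2 * (j : ℝ) - s) * θ)
      = (2 * Real.cosh θ) ^ s := by
  have key : ∀ j ∈ Finset.range (s + 1),
      (s.choose j : ℝ) * Real.cosh ((2 * (j : ℝ) - s) * θ)
        = (Real.exp θ ^ j * Real.exp (-θ) ^ (s - j) * (s.choose j : ℝ)
           + Real.exp (-θ) ^ j * Real.exp θ ^ (s - j) * (s.choose j : ℝ)) / 2 := by
    intro j hj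
    have hjs : j ≤ s := by simpa [Nat.lt_succ_iff] using Finset.mem_range.mp hj
    have hc : ((s - j : ℕ) : ℝ) = (s : ℝ) - j := by
      push_cast [Nat.cast_sub hjs]; ring
    rw [Real.cosh_eq, ← Real.exp_nat_mul, ← Real.exp_nat_mul, ← Real.exp_nat_mul,
      ← Real.exp_nat_mul, ← Real.exp_add, ← Real.exp_add]
    rw [hc]
    ring_nf
  rw [Finset.sum_congr rfl key, ← Finset.sum_div, Finset.sum_add_distrib,
    ← add_pow, ← add_pow]
  have : Real.exp θ + Real.exp (-θ) = 2 * Real.cosh θ := by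
    rw [Real.cosh_eq]; ring
  rw [this, add_comm (Real.exp (-θ))]
  rw [this]
  ring


/-- For even s ≥ 2, even ℓ, 0 ≤ r ≤ s, and x ≤ 0: 0 ≤ G_{r,s}(E_ℓ(x/s)) ≤ e^{|x|}. -/
theorem Q_small_x_bound (r s ℓ : ℕ) (hs2 : 2 ≤ s) (hse : Even s) (hℓe : Even ℓ)
    (hrs : r ≤ s) (x : ℝ) (hx : x ≤ 0) :
    0 ≤ (G r s).eval (E ℓ (x / s)) ∧ (G r s).eval (E ℓ (x / s)) ≤ Real.exp |x| := by
  have hs0 : (0 : ℝ) < s := by positivity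
  set y : ℝ := x / s with hy
  have hy0 : -y ≥ 0 := by
    have : y ≤ 0 := div_nonpos_of_nonpos_of_nonneg hx hs0.le
    linarith
  have hE : E ℓ y = ∑ j ∈ Finset.range (ℓ + 1), (-y) ^ j / (Nat.factorial j) := by
    unfold E
    refine Finset.sum_congr rfl fun j _ => ?_
    rw [neg_pow]; ring
  have hu1 : 1 ≤ E ℓ y := by
    rw [hE]
    have h0 : (0:ℕ) ∈ Finset.range (ℓ + 1) := by simp
    calc (1:ℝ) = (-y) ^ 0 / (Nat.factorial 0) := by simp
      _ ≤ _ := Finset.single_le_sum (f := fun j => (-y) ^ j / (Nat.factorial j))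
          (fun i _ => by positivity) h0
  have hu2 : E ℓ y ≤ Real.exp (-y) := by
    rw [hE]
    exact Real.sum_le_exp_of_nonneg hy0 (ℓ + 1)
  obtain ⟨θ, hθ⟩ := exists_cosh (E ℓ y) hu1
  have hG : (G r s).eval (E ℓ y) = ((2 : ℝ) ^ s)⁻¹ *
      ∑ j ∈ Finset.range (s + 1), (s.choose j : ℝ) *
        (if |2 * (j : ℤ) - s| ≤ (r : ℤ) then Real.cosh ((2 * (j : ℝ) - s) * θ) else 0) := by
    rw [← hθ]
    unfold G
    rw [Polynomial.eval_smul, smul_eq_mul, Polynomial.eval_finset_sum]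
    congr 1
    refine Finset.sum_congr rfl fun j _ => ?_
    rw [Polynomial.eval_smul, smul_eq_mul]
    congr 1
    split_ifs with h
    · unfold Phi
      rw [T_real_cosh]
      congr 1
      push_cast
      ring
    · simp
  constructor
  · rw [hG]
    apply mul_nonneg (by positivity)
    apply Finset.sum_nonneg
    intro j _
    apply mul_nonneg (by positivity)
    split_ifs
    · exact (Real.cosh_pos _).le
    · exact le_refl _
  · rw [hG]
    have hle : ∑ j ∈ Finset.range (s + 1), (s.choose j : ℝ) *
        (if |2 * (j : ℤ) - s| ≤ (r : ℤ) then Real.cosh ((2 * (j : ℝ) - s) * θ) else 0)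
        ≤ (2 * Real.cosh θ) ^ s := by
      rw [← sum_cosh s θ]
      refine Finset.sum_le_sum fun j _ => ?_
      apply mul_le_mul_of_nonneg_left _ (by positivity)
      split_ifs
      · exact le_refl _
      · exact (Real.cosh_pos _).le
    have habs : |x| = -x := abs_of_nonpos hx
    have hEexp : Real.exp (-y) = Real.exp (|x| / s) := by
      rw [habs, hy]; ring_nf
    have hub : ((2 : ℝ) ^ s)⁻¹ * (2 * Real.cosh θ) ^ s = (E ℓ y) ^ s := by
      rw [mul_pow, hθ]
      field_simp
    calc ((2 : ℝ) ^ s)⁻¹ * _ ≤ ((2 : ℝ) ^ s)⁻¹ * (2 * Real.cosh θ) ^ s :=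
          mul_le_mul_of_nonneg_left hle (by positivity)
      _ = (E ℓ y) ^ s := hub
      _ ≤ (Real.exp (|x| / s)) ^ s := by
          apply pow_le_pow_left₀ (by linarith) (hEexp ▸ hu2)
      _ = Real.exp |x| := by
          rw [← Real.exp_nat_mul]
          congr 1
          field_simp
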